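/- Let Q⁽¹⁾, ..., Q⁽ⁿ⁾ ∈ ℝ^{D×D} satisfy Q⁽ⁱ⁾ Q⁽ʲ⁾ = Q⁽ᵐᵃˣ⁽ⁱ'ʲ⁾⁾ for all 1 ≤ i, j ≤ n. Let α⁽¹⁾, ..., α⁽ⁿ⁾ : [0,1) → ℝ≥0 be nonvanishing functions with α⁽ⁱ⁾(0) = 1. Define for s ≤ t: Q_{t|s} := (α⁽¹⁾(t)/α⁽¹⁾(s))·I + Σ_{i=1}^{n−1} (α⁽ⁱ⁺¹⁾(t)/α⁽ⁱ⁺¹⁾(s) − α⁽ⁱ⁾(t)/α⁽ⁱ⁾(s))·Q⁽ⁱ⁾ + (1 − α⁽ⁿ⁾(t)/α⁽ⁿ⁾(s))·Q⁽ⁿ⁾. Then Q_{t|s} Q_{s|r} = Q_{t|r} for all 0 ≤ r ≤ s ≤ t < 1. -/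

import Mathlib

/-- generalized multi-level HDDM forward process, Proposition 1:
given operators `Q⁽¹⁾, ..., Q⁽ⁿ⁾` with `Q⁽ⁱ⁾Q⁽ʲ⁾ = Q⁽ᵐᵃˣ⁽ⁱ,ʲ⁾⁾` and nonvanishing
nonnegative schedules `α⁽ⁱ⁾` on `[0,1)` with `α⁽ⁱ⁾(0) = 1`, the kernels
`Q_{t|s} = (α⁽¹⁾t/α⁽¹⁾s)•I + Σᵢ (α⁽ⁱ⁺¹⁾t/α⁽ⁱ⁺¹⁾s − α⁽ⁱ⁾t/α⁽ⁱ⁾s)•Q⁽ⁱ⁾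
          + (1 − α⁽ⁿ⁾t/α⁽ⁿ⁾s)•Q⁽ⁿ⁾`
satisfy `Q_{t|s} Q_{s|r} = Q_{t|r}` for all `0 ≤ r ≤ s ≤ t < 1`. -/
theorem hddm_multilevel_chapman_kolmogorov {D n : ℕ} (hn : 1 ≤ n)
    (Q : ℕ → Matrix (Fin D) (Fin D) ℝ)
    (hQ : ∀ i j, 1 ≤ i → i ≤ n → 1 ≤ j → j ≤ n → Q i * Q j = Q (max i j))
    (α : ℕ → ℝ → ℝ)
    (hα0 : ∀ i, 1 ≤ i → i ≤ n → α i 0 = 1)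
    (hα_nonneg : ∀ i, 1 ≤ i → i ≤ n → ∀ t, 0 ≤ t → t < 1 → 0 ≤ α i t)
    (hα_ne : ∀ i, 1 ≤ i → i ≤ n → ∀ t, 0 ≤ t → t < 1 → α i t ≠ 0)
    (Qk : ℝ → ℝ → Matrix (Fin D) (Fin D) ℝ)
    (hQk : ∀ t s, Qk t s =
      (α 1 t / α 1 s) • (1 : Matrix (Fin D) (Fin D) ℝ)
        + ∑ i ∈ Finset.Ico 1 n, (α (i + 1) t / α (i + 1) s - α i t / α i s) • Q i
        + (1 - α n t / α n s) • Q n) :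
    ∀ r s t, 0 ≤ r → r ≤ s → s ≤ t → t < 1 → Qk t s * Qk s r = Qk t r := by
  intro r s t hr hrs hst ht1
  have hs0 : 0 ≤ s := hr.trans hrs
  have hs1 : s < 1 := lt_of_le_of_lt hst ht1
  -- extended operators
  set Q' : ℕ → Matrix (Fin D) (Fin D) ℝ :=
    fun i => if i = 0 then 1 else if i ≤ n then Q i else 0 with hQ'def
  have hQ'0 : Q' 0 = 1 := by simp [hQ'def]
  have hQ'mid : ∀ i, 1 ≤ i → i ≤ n → Q' i = Q i := by
    intro i h1 h2
    simp only [hQ'def]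
    rw [if_neg (by omega), if_pos h2]
  have hQ'top : ∀ i, n < i → Q' i = 0 := by
    intro i h
    simp only [hQ'def]
    rw [if_neg (by omega), if_neg (by omega)]
  have hQ'mul : ∀ i j, Q' i * Q' j = Q' (max i j) := by
    intro i j
    rcases Nat.eq_zero_or_pos i with hi | hi
    · subst hi; rw [hQ'0, one_mul, Nat.zero_max]
    rcases Nat.eq_zero_or_pos j with hj | hj
    · subst hj; rw [hQ'0, mul_one, Nat.max_zero]
    by_cases hin : i ≤ n
    · by_cases hjn : j ≤ n
      · rw [hQ'mid i hi hin, hQ'mid j hj hjn, hQ i j hi hin hj hjn,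
          hQ'mid (max i j) (le_max_of_le_left hi) (max_le hin hjn)]
      · rw [hQ'top j (by omega), mul_zero, hQ'top (max i j) (by omega)]
    · rw [hQ'top i (by omega), zero_mul, hQ'top (max i j) (by omega)]
  -- coefficients
    -- f u v k = α k u / α k v for k ≤ n, else 1
  set f : ℝ → ℝ → ℕ → ℝ := fun u v k => if k ≤ n then α k u / α k v else 1 with hfdef
  -- representation of the kernel
  have hrepr : ∀ u v : ℝ,
      Qk u v = ∑ i ∈ Finset.range (n + 1), f u v (i + 1) • (Q' i - Q' (i + 1)) := by
    intro u v
    obtain ⟨m, rfl⟩ : ∃ m, n = m + 1 := ⟨n - 1, by omega⟩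
    have hsub : ∑ i ∈ Finset.range (m + 1), f u v (i + 1 + 1) • Q' (i + 1)
          - ∑ i ∈ Finset.range (m + 1), f u v (i + 1) • Q' (i + 1)
        = ∑ i ∈ Finset.range (m + 1),
            (f u v (i + 1 + 1) - f u v (i + 1)) • Q' (i + 1) := by
      rw [← Finset.sum_sub_distrib]
      exact Finset.sum_congr rfl fun i _ => (sub_smul _ _ _).symm
    have h1 : f u v 1 = α 1 u / α 1 v := by simp [hfdef]
    have htop : f u v (m + 1 + 1) = 1 := by simp [hfdef]
    have hlast : f u v (m + 1) = α (m + 1) u / α (m + 1) v := by simp [hfdef]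
    have hQn : Q' (m + 1) = Q (m + 1) := hQ'mid (m + 1) (by omega) le_rfl
    have hmid : ∑ i ∈ Finset.Ico 1 (m + 1),
          (α (i + 1) u / α (i + 1) v - α i u / α i v) • Q i
        = ∑ i ∈ Finset.range m, (f u v (i + 1 + 1) - f u v (i + 1)) • Q' (i + 1) := by
      rw [Finset.sum_Ico_eq_sum_range]
      simp only [Nat.add_sub_cancel]
      refine Finset.sum_congr rfl fun i hi => ?_
      rw [Finset.mem_range] at hi
      have e1 : f u v (i + 1 + 1) = α (i + 1 + 1) u / α (i + 1 + 1) v := by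
        simp only [hfdef]; rw [if_pos (by omega)]
      have e2 : f u v (i + 1) = α (i + 1) u / α (i + 1) v := by
        simp only [hfdef]; rw [if_pos (by omega)]
      rw [e1, e2, hQ'mid (i + 1) (by omega) (by omega), Nat.add_comm 1 i]
    rw [hQk]
    symm
    calc ∑ i ∈ Finset.range (m + 1 + 1), f u v (i + 1) • (Q' i - Q' (i + 1))
        = ∑ i ∈ Finset.range (m + 1 + 1),
            (f u v (i + 1) • Q' i - f u v (i + 1) • Q' (i + 1)) :=
          Finset.sum_congr rfl fun i _ => smul_sub _ _ _
      _ = ∑ i ∈ Finset.range (m + 1 + 1), f u v (i + 1) • Q' i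
            - ∑ i ∈ Finset.range (m + 1 + 1), f u v (i + 1) • Q' (i + 1) :=
          Finset.sum_sub_distrib _ _
      _ = (∑ i ∈ Finset.range (m + 1), f u v (i + 1 + 1) • Q' (i + 1)
              + f u v (0 + 1) • Q' 0)
            - (∑ i ∈ Finset.range (m + 1), f u v (i + 1) • Q' (i + 1)
              + f u v (m + 1 + 1) • Q' (m + 1 + 1)) := by
          rw [Finset.sum_range_succ' (fun i => f u v (i + 1) • Q' i) (m + 1),
            Finset.sum_range_succ (fun i => f u v (i + 1) • Q' (i + 1)) (m + 1)]
      _ = f u v 1 • (1 : Matrix (Fin D) (Fin D) ℝ)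
            + (∑ i ∈ Finset.range (m + 1), f u v (i + 1 + 1) • Q' (i + 1)
              - ∑ i ∈ Finset.range (m + 1), f u v (i + 1) • Q' (i + 1)) := by
          rw [hQ'0, hQ'top (m + 1 + 1) (by omega), smul_zero, add_zero]
          abel
      _ = f u v 1 • (1 : Matrix (Fin D) (Fin D) ℝ)
            + ∑ i ∈ Finset.range (m + 1),
                (f u v (i + 1 + 1) - f u v (i + 1)) • Q' (i + 1) := by rw [hsub]
      _ = f u v 1 • (1 : Matrix (Fin D) (Fin D) ℝ)
            + (∑ i ∈ Finset.range m, (f u v (i + 1 + 1) - f u v (i + 1)) • Q' (i + 1)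
              + (f u v (m + 1 + 1) - f u v (m + 1)) • Q' (m + 1)) := by
          rw [Finset.sum_range_succ]
      _ = (α 1 u / α 1 v) • (1 : Matrix (Fin D) (Fin D) ℝ)
            + ∑ i ∈ Finset.Ico 1 (m + 1),
                (α (i + 1) u / α (i + 1) v - α i u / α i v) • Q i
            + (1 - α (m + 1) u / α (m + 1) v) • Q (m + 1) := by
          rw [htop, hlast, hQn, h1, hmid]
          abel
  -- orthogonality of the differences
  have hP : ∀ i j, (Q' i - Q' (i + 1)) * (Q' j - Q' (j + 1))
      = if i = j then Q' i - Q' (i + 1) else 0 := by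
    intro i j
    rw [sub_mul, mul_sub, mul_sub, hQ'mul, hQ'mul, hQ'mul, hQ'mul]
    rcases lt_trichotomy i j with h | h | h
    · rw [if_neg h.ne, max_eq_right h.le, max_eq_right (by omega : i ≤ j + 1),
        max_eq_right (by omega : i + 1 ≤ j), max_eq_right (by omega : i + 1 ≤ j + 1)]
      abel
    · subst h
      rw [if_pos rfl, max_self, max_eq_right (by omega : i ≤ i + 1),
        max_eq_left (by omega : i ≤ i + 1), max_self]
      abel
    · rw [if_neg h.ne', max_eq_left h.le, max_eq_left (by omega : j + 1 ≤ i),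
        max_eq_left (by omega : j ≤ i + 1), max_eq_left (by omega : j + 1 ≤ i + 1)]
      abel
  -- coefficient multiplicativity
  have hfmul : ∀ k, 1 ≤ k → f t s k * f s r k = f t r k := by
    intro k hk
    by_cases hkn : k ≤ n
    · have hb : α k s ≠ 0 := hα_ne k hk hkn s hs0 hs1
      simp only [hfdef, if_pos hkn]
      rw [div_mul_div_comm, mul_comm (α k t) (α k s), mul_div_mul_left _ _ hb]
    · simp [hfdef, hkn]
  -- put it together
  rw [hrepr t s, hrepr s r, hrepr t r, Finset.sum_mul_sum]
  refine Finset.sum_congr rfl fun i hi => ?_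
  have step : ∀ j, (f t s (i + 1) • (Q' i - Q' (i + 1))) * (f s r (j + 1) • (Q' j - Q' (j + 1)))
      = if i = j then (f t s (i + 1) * f s r (j + 1)) • (Q' i - Q' (i + 1)) else 0 := by
    intro j
    rw [smul_mul_smul_comm, hP]
    split <;> simp
  simp only [step]
  rw [Finset.sum_ite_eq (Finset.range (n + 1)) i
    (fun j => (f t s (i + 1) * f s r (j + 1)) • (Q' i - Q' (i + 1))), if_pos hi,
    hfmul (i + 1) (by omega)]
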